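/- There exists a decision-making mechanism with imperfect information that is epistemic-gap-free but is not an elected epistemic dictatorship. (For instance, the three-agent mechanism M of the paper: agent A at the root chooses between subtree u_2 and subtree u_3; in u_3 agent C alone decides Yes or No; in u_2 agent B has actions 0,1,2 where action 1 yields Yes immediately, action 0 leads to a node u_5 where B decides Yes/No, and action 2 leads to a node u_6 where B decides Yes/No, but B cannot distinguish u_2 from a node u_4 reached differently where action 0 yields No.) -/

import Mathlib

inductive Outcome where
  | yes : Outcome
  | no : Outcome
deriving DecidableEq

def Outcome.flip : Outcome → Outcome
  | .yes => .no
  | .no => .yes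

/-- A decision-making mechanism (perfect information):
a finite rooted directed tree `(V, E)` with root `root`,
agents `A`, actions `Act`, available-action sets `Δ`,
choice functions `τ`, and a leaf labelling `lab`. -/
structure Mech (V A Act : Type) where
  finV : Fintype V
  E : V → V → Prop
  root : V
  root_no_parent : ∀ v, ¬ E v root
  unique_parent : ∀ u v w, E u w → E v w → u = v
  reach : ∀ v, Relation.ReflTransGen E root v
  Δ : A → V → Set Act
  Δ_nonempty : ∀ a v, (∃ u, E v u) → (Δ a v).Nonempty
  τ : V → (A → Act) → V
  τ_child : ∀ v δ, (∃ u, E v u) → (∀ b, δ b ∈ Δ b v) → E v (τ v δ)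
  lab : V → Outcome

namespace Mech

variable {V A Act : Type}

def IsLeaf (M : Mech V A Act) (v : V) : Prop := ∀ u, ¬ M.E v u

def IsDecision (M : Mech V A Act) (v : V) : Prop := ∃ u, M.E v u

/-- `Next a d v` : the set of children the process can move to from `v`
when agent `a` chooses action `d`. -/
def Next (M : Mech V A Act) (a : A) (d : Act) (v : V) : Set V :=
  { u | ∃ δ : A → Act, (∀ b, δ b ∈ M.Δ b v) ∧ δ a = d ∧ u = M.τ v δ }

/-- `win_a(o)`: the smallest set containing all leaves labelled `o` and
closed under: if `Next a d v ⊆ win_a(o)` for some available action `d`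
at a decision node `v`, then `v ∈ win_a(o)`. -/
inductive Win (M : Mech V A Act) (a : A) (o : Outcome) : V → Prop where
  | leaf (v : V) : M.IsLeaf v → M.lab v = o → Win M a o v
  | step (v : V) (d : Act) : M.IsDecision v → d ∈ M.Δ a v →
      (∀ u ∈ M.Next a d v, Win M a o u) → Win M a o v

/-- A decision path starting at the root. -/
def RootPath (M : Mech V A Act) (l : List V) : Prop :=
  l.head? = some M.root ∧ l.Chain' M.E

/-- Agent `a` is (counterfactually) responsible at leaf `v`. -/
def Responsible (M : Mech V A Act) (a : A) (v : V) : Prop :=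
  ∃ l : List V, M.RootPath l ∧ l.getLast? = some v ∧
    ∃ u ∈ l, M.IsDecision u ∧ M.Win a (M.lab v).flip u

def GapFree (M : Mech V A Act) : Prop :=
  ∀ v, M.IsLeaf v → ∃ a, M.Responsible a v

def Dictator (M : Mech V A Act) (a : A) (v : V) : Prop :=
  M.Win a Outcome.yes v ∧ M.Win a Outcome.no v

def ElectedDictatorship (M : Mech V A Act) : Prop :=
  ∀ (l : List V) (v : V), M.RootPath l → l.getLast? = some v → M.IsLeaf v →
    ∃ u ∈ l, ∃ a, M.Dictator a u

end Mech

/-- A decision-making mechanism with imperfect information. -/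
structure IMech (V A Act : Type) extends Mech V A Act where
  sim : A → V → V → Prop
  sim_equiv : ∀ a, Equivalence (sim a)
  sim_decision : ∀ a u v, sim a u v → ((∃ w, E u w) ↔ (∃ w, E v w))
  sim_Δ : ∀ a u v, sim a u v → Δ a u = Δ a v

namespace IMech

variable {V A Act : Type}

/-- `Next a d ([v]_a)` : the union of `Next a d u` over all `u ∼_a v`. -/
def NextCl (M : IMech V A Act) (a : A) (d : Act) (v : V) : Set V :=
  { w | ∃ u, M.sim a v u ∧ w ∈ M.toMech.Next a d u }

/-- `ewin_a(o)`. -/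
inductive EWin (M : IMech V A Act) (a : A) (o : Outcome) : V → Prop where
  | leaf (v : V) : M.toMech.IsLeaf v → M.lab v = o → EWin M a o v
  | known (v : V) (d : Act) : M.toMech.IsDecision v → d ∈ M.Δ a v →
      (∀ w ∈ M.NextCl a d v, EWin M a o w) → EWin M a o v
  | blind (v : V) : M.toMech.IsDecision v →
      (∀ d ∈ M.Δ a v, ∀ w ∈ M.toMech.Next a d v, EWin M a o w) → EWin M a o v

/-- `uwin_a(o)`. -/
inductive UWin (M : IMech V A Act) (a : A) (o : Outcome) : V → Prop where
  | leaf (v : V) : M.toMech.IsLeaf v → M.lab v = o → UWin M a o v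
  | known (v : V) (d : Act) : M.toMech.IsDecision v → d ∈ M.Δ a v →
      (∀ w ∈ M.NextCl a d v, UWin M a o w) → UWin M a o v

def EpistemicallyResponsible (M : IMech V A Act) (a : A) (v : V) : Prop :=
  ∃ l : List V, M.toMech.RootPath l ∧ l.getLast? = some v ∧
    ∃ u ∈ l, M.toMech.IsDecision u ∧ M.EWin a (M.lab v).flip u

def EpistemicGapFree (M : IMech V A Act) : Prop :=
  ∀ v, M.toMech.IsLeaf v → ∃ a, M.EpistemicallyResponsible a v

def EpistemicDictator (M : IMech V A Act) (a : A) (v : V) : Prop :=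
  M.EWin a Outcome.yes v ∧ M.EWin a Outcome.no v

def ElectedEpistemicDictatorship (M : IMech V A Act) : Prop :=
  ∀ (l : List V) (v : V), M.toMech.RootPath l → l.getLast? = some v →
    M.toMech.IsLeaf v → ∃ u ∈ l, ∃ a, M.EpistemicDictator a u

def SemiEpistemicDictator (M : IMech V A Act) (a : A) (v : V) : Prop :=
  ∃ o : Outcome, M.EWin a o v ∧ M.toMech.Win a o.flip v

def ElectedSemiEpistemicDictatorship (M : IMech V A Act) : Prop :=
  ∀ (l : List V) (v : V), M.toMech.RootPath l → l.getLast? = some v →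
    M.toMech.IsLeaf v → ∃ u ∈ l, ∃ a, M.SemiEpistemicDictator a u

end IMech
namespace S17

inductive Ag | b | c
deriving DecidableEq

instance : Fintype Ag := ⟨⟨{Ag.b, Ag.c}, by decide⟩, fun a => by cases a <;> decide⟩

inductive Nd
  | r | u2 | u4 | c4 | cp | X | D1 | D3 | D4 | CD | CD2
  | L1y | L1n | L3y | L3n | L5y | L5n | L6y | L6n | L7y | L7n
  | Lxy | Lxn | Lpn | Lpw | Lpv
deriving DecidableEq

instance : Fintype Nd :=
  ⟨⟨{Nd.r, Nd.u2, Nd.u4, Nd.c4, Nd.cp, Nd.X, Nd.D1, Nd.D3, Nd.D4, Nd.CD, Nd.CD2,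
     Nd.L1y, Nd.L1n, Nd.L3y, Nd.L3n, Nd.L5y, Nd.L5n, Nd.L6y, Nd.L6n, Nd.L7y, Nd.L7n,
     Nd.Lxy, Nd.Lxn, Nd.Lpn, Nd.Lpw, Nd.Lpv}, by decide⟩, fun a => by cases a <;> decide⟩

def tau : Nd → (Ag → Bool) → Nd
  | .r, δ => match δ .c with | false => .u2 | true => .u4
  | .u2, _ => .D1
  | .u4, δ => match δ .b with | false => .c4 | true => .X
  | .c4, δ => match δ .b with | false => .D3 | true => .CD2
  | .cp, δ => match δ .b, δ .c with
    | false, false => .D4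
    | false, true => .Lpn
    | true, false => .Lpw
    | true, true => .Lpv
  | .X, δ => match δ .b, δ .c with
    | false, false => .CD
    | true, false => .Lxy
    | false, true => .Lxn
    | true, true => .cp
  | .D1, δ => match δ .b with | false => .L1y | true => .L1n
  | .D3, δ => match δ .b with | false => .L3y | true => .L3n
  | .D4, δ => match δ .b with | false => .L7y | true => .L7n
  | .CD, δ => match δ .c with | false => .L6y | true => .L6n
  | .CD2, δ => match δ .c with | false => .L5y | true => .L5n
  | _, _ => .r

def kids : Nd → List Nd
  | .r => [.u2, .u4]
  | .u2 => [.D1]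
  | .u4 => [.c4, .X]
  | .c4 => [.D3, .CD2]
  | .cp => [.D4, .Lpn, .Lpw, .Lpv]
  | .X => [.CD, .Lxy, .Lxn, .cp]
  | .D1 => [.L1y, .L1n]
  | .D3 => [.L3y, .L3n]
  | .D4 => [.L7y, .L7n]
  | .CD => [.L6y, .L6n]
  | .CD2 => [.L5y, .L5n]
  | _ => []

def Ed (v w : Nd) : Prop := w ∈ kids v

instance : ∀ v w, Decidable (Ed v w) := fun v w =>
  inferInstanceAs (Decidable (w ∈ kids v))

def labf : Nd → Outcome
  | .L1y => .yes | .L3y => .yes | .L5y => .yes | .L6y => .yes | .L7y => .yes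
  | .Lxy => .yes | .Lpv => .yes
  | _ => .no

def bpart : Nd → Option Nd
  | .u2 => some .u4
  | .u4 => some .u2
  | .c4 => some .cp
  | .cp => some .c4
  | _ => none

def simf (a : Ag) (u v : Nd) : Prop := u = v ∨ (a = Ag.b ∧ bpart u = some v)

instance : ∀ a u v, Decidable (simf a u v) := fun a u v =>
  inferInstanceAs (Decidable (_ ∨ _))

def reachAll : ∀ v, Relation.ReflTransGen Ed Nd.r v := by
  have hr : Relation.ReflTransGen Ed Nd.r Nd.r := .refl
  have h2 : Relation.ReflTransGen Ed Nd.r Nd.u2 := hr.tail (by decide)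
  have h4 : Relation.ReflTransGen Ed Nd.r Nd.u4 := hr.tail (by decide)
  have hD1 : Relation.ReflTransGen Ed Nd.r Nd.D1 := h2.tail (by decide)
  have hc4 : Relation.ReflTransGen Ed Nd.r Nd.c4 := h4.tail (by decide)
  have hX : Relation.ReflTransGen Ed Nd.r Nd.X := h4.tail (by decide)
  have hD3 : Relation.ReflTransGen Ed Nd.r Nd.D3 := hc4.tail (by decide)
  have hCD2 : Relation.ReflTransGen Ed Nd.r Nd.CD2 := hc4.tail (by decide)
  have hCD : Relation.ReflTransGen Ed Nd.r Nd.CD := hX.tail (by decide)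
  have hcp : Relation.ReflTransGen Ed Nd.r Nd.cp := hX.tail (by decide)
  have hD4 : Relation.ReflTransGen Ed Nd.r Nd.D4 := hcp.tail (by decide)
  intro v
  cases v with
  | r => exact hr
  | u2 => exact h2
  | u4 => exact h4
  | c4 => exact hc4
  | cp => exact hcp
  | X => exact hX
  | D1 => exact hD1
  | D3 => exact hD3
  | D4 => exact hD4
  | CD => exact hCD
  | CD2 => exact hCD2
  | L1y => exact hD1.tail (by decide)
  | L1n => exact hD1.tail (by decide)
  | L3y => exact hD3.tail (by decide)
  | L3n => exact hD3.tail (by decide)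
  | L5y => exact hCD2.tail (by decide)
  | L5n => exact hCD2.tail (by decide)
  | L6y => exact hCD.tail (by decide)
  | L6n => exact hCD.tail (by decide)
  | L7y => exact hD4.tail (by decide)
  | L7n => exact hD4.tail (by decide)
  | Lxy => exact hX.tail (by decide)
  | Lxn => exact hX.tail (by decide)
  | Lpn => exact hcp.tail (by decide)
  | Lpw => exact hcp.tail (by decide)
  | Lpv => exact hcp.tail (by decide)

set_option maxHeartbeats 2000000 in
def M : IMech Nd Ag Bool where
  finV := inferInstance
  E := Ed
  root := .r
  root_no_parent := by decide
  unique_parent := by decide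
  reach := reachAll
  Δ := fun _ _ => Set.univ
  Δ_nonempty := fun _ _ _ => ⟨false, Set.mem_univ _⟩
  τ := tau
  τ_child := by
    intro v δ hd _
    cases v <;>
      first
        | exact absurd hd (by decide)
        | (rcases hb : δ Ag.b <;> rcases hc : δ Ag.c <;>
            simp [tau, hb, hc, Ed, kids])
  lab := labf
  sim := simf
  sim_equiv := by
    have hs : ∀ a x y, simf a x y → simf a y x := by decide
    have ht : ∀ a x y z, simf a x y → simf a y z → simf a x z := by decide
    exact fun a => ⟨fun x => Or.inl rfl, fun h => hs _ _ _ h, fun h h' => ht _ _ _ _ h h'⟩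
  sim_decision := by decide
  sim_Δ := fun _ _ _ _ => rfl

/-! helpers -/

lemma ed_E {v w : Nd} (h : Ed v w) : M.toMech.E v w := h

lemma isLeaf_of (v : Nd) (h : kids v = []) : M.toMech.IsLeaf v := by
  intro u hu
  have h2 : Ed v u := hu
  rw [Ed, h] at h2
  exact List.not_mem_nil h2

lemma isDec (v w : Nd) (h : Ed v w) : M.toMech.IsDecision v := ⟨w, h⟩

def pr (x y : Bool) : Ag → Bool
  | .b => x
  | .c => y

lemma mem_nextCl {a : Ag} {d : Bool} {v u w : Nd} (hs : simf a v u) (δ : Ag → Bool)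
    (hd : δ a = d) (hw : tau u δ = w) : w ∈ M.NextCl a d v :=
  ⟨u, hs, δ, fun _ => Set.mem_univ _, hd, hw.symm⟩

lemma mem_next {a : Ag} {d : Bool} {v w : Nd} (δ : Ag → Bool)
    (hd : δ a = d) (hw : tau v δ = w) : w ∈ M.toMech.Next a d v :=
  ⟨δ, fun _ => Set.mem_univ _, hd, hw.symm⟩

/-! ## Positive EWin facts -/

lemma pByesD1 : M.EWin Ag.b Outcome.yes Nd.D1 := by
  apply IMech.EWin.known _ false (isDec _ .L1y (by decide)) (Set.mem_univ _)
  intro w hw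
  obtain ⟨u, hs, δ, -, hd, hw'⟩ := hw
  subst hw'
  have hs' : simf Ag.b Nd.D1 u := hs
  rcases hs' with rfl | ⟨-, hp⟩
  · have ht : tau Nd.D1 δ = Nd.L1y := by simp [tau, hd]
    show M.EWin Ag.b Outcome.yes (tau Nd.D1 δ)
    rw [ht]
    exact IMech.EWin.leaf _ (isLeaf_of _ rfl) rfl
  · simp [bpart] at hp

lemma pBnoD1 : M.EWin Ag.b Outcome.no Nd.D1 := by
  apply IMech.EWin.known _ true (isDec _ .L1y (by decide)) (Set.mem_univ _)
  intro w hw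
  obtain ⟨u, hs, δ, -, hd, hw'⟩ := hw
  subst hw'
  have hs' : simf Ag.b Nd.D1 u := hs
  rcases hs' with rfl | ⟨-, hp⟩
  · have ht : tau Nd.D1 δ = Nd.L1n := by simp [tau, hd]
    show M.EWin Ag.b Outcome.no (tau Nd.D1 δ)
    rw [ht]
    exact IMech.EWin.leaf _ (isLeaf_of _ rfl) rfl
  · simp [bpart] at hp

lemma pByesD3 : M.EWin Ag.b Outcome.yes Nd.D3 := by
  apply IMech.EWin.known _ false (isDec _ .L3y (by decide)) (Set.mem_univ _)
  intro w hw
  obtain ⟨u, hs, δ, -, hd, hw'⟩ := hw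
  subst hw'
  have hs' : simf Ag.b Nd.D3 u := hs
  rcases hs' with rfl | ⟨-, hp⟩
  · have ht : tau Nd.D3 δ = Nd.L3y := by simp [tau, hd]
    show M.EWin Ag.b Outcome.yes (tau Nd.D3 δ)
    rw [ht]
    exact IMech.EWin.leaf _ (isLeaf_of _ rfl) rfl
  · simp [bpart] at hp

lemma pBnoD3 : M.EWin Ag.b Outcome.no Nd.D3 := by
  apply IMech.EWin.known _ true (isDec _ .L3y (by decide)) (Set.mem_univ _)
  intro w hw
  obtain ⟨u, hs, δ, -, hd, hw'⟩ := hw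
  subst hw'
  have hs' : simf Ag.b Nd.D3 u := hs
  rcases hs' with rfl | ⟨-, hp⟩
  · have ht : tau Nd.D3 δ = Nd.L3n := by simp [tau, hd]
    show M.EWin Ag.b Outcome.no (tau Nd.D3 δ)
    rw [ht]
    exact IMech.EWin.leaf _ (isLeaf_of _ rfl) rfl
  · simp [bpart] at hp

lemma pByesD4 : M.EWin Ag.b Outcome.yes Nd.D4 := by
  apply IMech.EWin.known _ false (isDec _ .L7y (by decide)) (Set.mem_univ _)
  intro w hw
  obtain ⟨u, hs, δ, -, hd, hw'⟩ := hw
  subst hw'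
  have hs' : simf Ag.b Nd.D4 u := hs
  rcases hs' with rfl | ⟨-, hp⟩
  · have ht : tau Nd.D4 δ = Nd.L7y := by simp [tau, hd]
    show M.EWin Ag.b Outcome.yes (tau Nd.D4 δ)
    rw [ht]
    exact IMech.EWin.leaf _ (isLeaf_of _ rfl) rfl
  · simp [bpart] at hp

lemma pBnoD4 : M.EWin Ag.b Outcome.no Nd.D4 := by
  apply IMech.EWin.known _ true (isDec _ .L7y (by decide)) (Set.mem_univ _)
  intro w hw
  obtain ⟨u, hs, δ, -, hd, hw'⟩ := hw
  subst hw'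
  have hs' : simf Ag.b Nd.D4 u := hs
  rcases hs' with rfl | ⟨-, hp⟩
  · have ht : tau Nd.D4 δ = Nd.L7n := by simp [tau, hd]
    show M.EWin Ag.b Outcome.no (tau Nd.D4 δ)
    rw [ht]
    exact IMech.EWin.leaf _ (isLeaf_of _ rfl) rfl
  · simp [bpart] at hp

lemma pCyesCD : M.EWin Ag.c Outcome.yes Nd.CD := by
  apply IMech.EWin.known _ false (isDec _ .L6y (by decide)) (Set.mem_univ _)
  intro w hw
  obtain ⟨u, hs, δ, -, hd, hw'⟩ := hw
  subst hw'
  have hs' : simf Ag.c Nd.CD u := hs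
  rcases hs' with rfl | ⟨hab, -⟩
  · have ht : tau Nd.CD δ = Nd.L6y := by simp [tau, hd]
    show M.EWin Ag.c Outcome.yes (tau Nd.CD δ)
    rw [ht]
    exact IMech.EWin.leaf _ (isLeaf_of _ rfl) rfl
  · exact absurd hab (by decide)

lemma pCnoCD : M.EWin Ag.c Outcome.no Nd.CD := by
  apply IMech.EWin.known _ true (isDec _ .L6y (by decide)) (Set.mem_univ _)
  intro w hw
  obtain ⟨u, hs, δ, -, hd, hw'⟩ := hw
  subst hw'
  have hs' : simf Ag.c Nd.CD u := hs
  rcases hs' with rfl | ⟨hab, -⟩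
  · have ht : tau Nd.CD δ = Nd.L6n := by simp [tau, hd]
    show M.EWin Ag.c Outcome.no (tau Nd.CD δ)
    rw [ht]
    exact IMech.EWin.leaf _ (isLeaf_of _ rfl) rfl
  · exact absurd hab (by decide)

lemma pCyesCD2 : M.EWin Ag.c Outcome.yes Nd.CD2 := by
  apply IMech.EWin.known _ false (isDec _ .L5y (by decide)) (Set.mem_univ _)
  intro w hw
  obtain ⟨u, hs, δ, -, hd, hw'⟩ := hw
  subst hw'
  have hs' : simf Ag.c Nd.CD2 u := hs
  rcases hs' with rfl | ⟨hab, -⟩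
  · have ht : tau Nd.CD2 δ = Nd.L5y := by simp [tau, hd]
    show M.EWin Ag.c Outcome.yes (tau Nd.CD2 δ)
    rw [ht]
    exact IMech.EWin.leaf _ (isLeaf_of _ rfl) rfl
  · exact absurd hab (by decide)

lemma pCnoCD2 : M.EWin Ag.c Outcome.no Nd.CD2 := by
  apply IMech.EWin.known _ true (isDec _ .L5y (by decide)) (Set.mem_univ _)
  intro w hw
  obtain ⟨u, hs, δ, -, hd, hw'⟩ := hw
  subst hw'
  have hs' : simf Ag.c Nd.CD2 u := hs
  rcases hs' with rfl | ⟨hab, -⟩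
  · have ht : tau Nd.CD2 δ = Nd.L5n := by simp [tau, hd]
    show M.EWin Ag.c Outcome.no (tau Nd.CD2 δ)
    rw [ht]
    exact IMech.EWin.leaf _ (isLeaf_of _ rfl) rfl
  · exact absurd hab (by decide)

lemma pBnoc4 : M.EWin Ag.b Outcome.no Nd.c4 := by
  apply IMech.EWin.known _ false (isDec _ .D3 (by decide)) (Set.mem_univ _)
  intro w hw
  obtain ⟨u, hs, δ, -, hd, hw'⟩ := hw
  subst hw'
  have hs' : simf Ag.b Nd.c4 u := hs
  rcases hs' with rfl | ⟨-, hp⟩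
  · have ht : tau Nd.c4 δ = Nd.D3 := by simp [tau, hd]
    show M.EWin Ag.b Outcome.no (tau Nd.c4 δ)
    rw [ht]
    exact pBnoD3
  · simp only [bpart, Option.some.injEq] at hp
    subst hp
    show M.EWin Ag.b Outcome.no (tau Nd.cp δ)
    rcases hc : δ Ag.c
    · have ht : tau Nd.cp δ = Nd.D4 := by simp [tau, hd, hc]
      rw [ht]; exact pBnoD4
    · have ht : tau Nd.cp δ = Nd.Lpn := by simp [tau, hd, hc]
      rw [ht]
      exact IMech.EWin.leaf _ (isLeaf_of _ rfl) rfl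

lemma pBnou4 : M.EWin Ag.b Outcome.no Nd.u4 := by
  apply IMech.EWin.known _ false (isDec _ .c4 (by decide)) (Set.mem_univ _)
  intro w hw
  obtain ⟨u, hs, δ, -, hd, hw'⟩ := hw
  subst hw'
  have hs' : simf Ag.b Nd.u4 u := hs
  rcases hs' with rfl | ⟨-, hp⟩
  · have ht : tau Nd.u4 δ = Nd.c4 := by simp [tau, hd]
    show M.EWin Ag.b Outcome.no (tau Nd.u4 δ)
    rw [ht]; exact pBnoc4
  · simp only [bpart, Option.some.injEq] at hp
    subst hp
    show M.EWin Ag.b Outcome.no (tau Nd.u2 δ)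
    exact pBnoD1

lemma pCyesX : M.EWin Ag.c Outcome.yes Nd.X := by
  apply IMech.EWin.known _ false (isDec _ .CD (by decide)) (Set.mem_univ _)
  intro w hw
  obtain ⟨u, hs, δ, -, hd, hw'⟩ := hw
  subst hw'
  have hs' : simf Ag.c Nd.X u := hs
  rcases hs' with rfl | ⟨hab, -⟩
  · show M.EWin Ag.c Outcome.yes (tau Nd.X δ)
    rcases hb : δ Ag.b
    · have ht : tau Nd.X δ = Nd.CD := by simp [tau, hd, hb]
      rw [ht]; exact pCyesCD
    · have ht : tau Nd.X δ = Nd.Lxy := by simp [tau, hd, hb]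
      rw [ht]
      exact IMech.EWin.leaf _ (isLeaf_of _ rfl) rfl
  · exact absurd hab (by decide)

/-! ## Negative EWin facts -/

lemma leaf_not {a : Ag} {o : Outcome} {v : Nd} (hk : kids v = []) (hlab : labf v ≠ o) :
    ¬ M.EWin a o v := by
  intro h
  cases h with
  | leaf _ hl hl2 => exact hlab hl2
  | known _ d hdec _ _ =>
      obtain ⟨u, hu⟩ := hdec
      have h2 : Ed v u := hu
      rw [Ed, hk] at h2
      exact List.not_mem_nil h2
  | blind _ hdec _ =>
      obtain ⟨u, hu⟩ := hdec
      have h2 : Ed v u := hu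
      rw [Ed, hk] at h2
      exact List.not_mem_nil h2

lemma notCyesD1 : ¬ M.EWin Ag.c Outcome.yes Nd.D1 := by
  intro h
  cases h with
  | leaf _ hl _ => exact hl Nd.L1y (ed_E (by decide))
  | known _ d _ _ hall =>
      exact leaf_not (v := Nd.L1n) rfl (by decide) (hall Nd.L1n (mem_nextCl (Or.inl rfl) (pr true d) rfl rfl))
  | blind _ _ hall =>
      exact leaf_not (v := Nd.L1n) rfl (by decide)
        (hall true (Set.mem_univ _) Nd.L1n (mem_next (pr true true) rfl rfl))

lemma notCyesD3 : ¬ M.EWin Ag.c Outcome.yes Nd.D3 := by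
  intro h
  cases h with
  | leaf _ hl _ => exact hl Nd.L3y (ed_E (by decide))
  | known _ d _ _ hall =>
      exact leaf_not (v := Nd.L3n) rfl (by decide) (hall Nd.L3n (mem_nextCl (Or.inl rfl) (pr true d) rfl rfl))
  | blind _ _ hall =>
      exact leaf_not (v := Nd.L3n) rfl (by decide)
        (hall true (Set.mem_univ _) Nd.L3n (mem_next (pr true true) rfl rfl))

lemma notCnoD4 : ¬ M.EWin Ag.c Outcome.no Nd.D4 := by
  intro h
  cases h with
  | leaf _ hl _ => exact hl Nd.L7y (ed_E (by decide))
  | known _ d _ _ hall =>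
      exact leaf_not (v := Nd.L7y) rfl (by decide) (hall Nd.L7y (mem_nextCl (Or.inl rfl) (pr false d) rfl rfl))
  | blind _ _ hall =>
      exact leaf_not (v := Nd.L7y) rfl (by decide)
        (hall false (Set.mem_univ _) Nd.L7y (mem_next (pr false false) rfl rfl))

lemma notByesCD2 : ¬ M.EWin Ag.b Outcome.yes Nd.CD2 := by
  intro h
  cases h with
  | leaf _ hl _ => exact hl Nd.L5y (ed_E (by decide))
  | known _ d _ _ hall =>
      exact leaf_not (v := Nd.L5n) rfl (by decide) (hall Nd.L5n (mem_nextCl (Or.inl rfl) (pr d true) rfl rfl))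
  | blind _ _ hall =>
      exact leaf_not (v := Nd.L5n) rfl (by decide)
        (hall false (Set.mem_univ _) Nd.L5n (mem_next (pr false true) rfl rfl))

lemma notByescp : ¬ M.EWin Ag.b Outcome.yes Nd.cp := by
  intro h
  cases h with
  | leaf _ hl _ => exact hl Nd.D4 (ed_E (by decide))
  | known _ d _ _ hall =>
      cases d
      · exact leaf_not (v := Nd.Lpn) rfl (by decide) (hall Nd.Lpn (mem_nextCl (Or.inl rfl) (pr false true) rfl rfl))
      · exact leaf_not (v := Nd.Lpw) rfl (by decide) (hall Nd.Lpw (mem_nextCl (Or.inl rfl) (pr true false) rfl rfl))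
  | blind _ _ hall =>
      exact leaf_not (v := Nd.Lpn) rfl (by decide)
        (hall false (Set.mem_univ _) Nd.Lpn (mem_next (pr false true) rfl rfl))

lemma notByesc4 : ¬ M.EWin Ag.b Outcome.yes Nd.c4 := by
  intro h
  cases h with
  | leaf _ hl _ => exact hl Nd.D3 (ed_E (by decide))
  | known _ d _ _ hall =>
      cases d
      · exact leaf_not (v := Nd.Lpn) rfl (by decide)
          (hall Nd.Lpn (mem_nextCl (Or.inr ⟨rfl, rfl⟩) (pr false true) rfl rfl))
      · exact leaf_not (v := Nd.Lpw) rfl (by decide)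
          (hall Nd.Lpw (mem_nextCl (Or.inr ⟨rfl, rfl⟩) (pr true false) rfl rfl))
  | blind _ _ hall =>
      exact notByesCD2 (hall true (Set.mem_univ _) Nd.CD2 (mem_next (pr true false) rfl rfl))

lemma notByesX : ¬ M.EWin Ag.b Outcome.yes Nd.X := by
  intro h
  cases h with
  | leaf _ hl _ => exact hl Nd.CD (ed_E (by decide))
  | known _ d _ _ hall =>
      cases d
      · exact leaf_not (v := Nd.Lxn) rfl (by decide)
          (hall Nd.Lxn (mem_nextCl (Or.inl rfl) (pr false true) rfl rfl))
      · exact notByescp (hall Nd.cp (mem_nextCl (Or.inl rfl) (pr true true) rfl rfl))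
  | blind _ _ hall =>
      exact leaf_not (v := Nd.Lxn) rfl (by decide)
        (hall false (Set.mem_univ _) Nd.Lxn (mem_next (pr false true) rfl rfl))

lemma notByesu4 : ¬ M.EWin Ag.b Outcome.yes Nd.u4 := by
  intro h
  cases h with
  | leaf _ hl _ => exact hl Nd.c4 (ed_E (by decide))
  | known _ d _ _ hall =>
      cases d
      · exact notByesc4 (hall Nd.c4 (mem_nextCl (Or.inl rfl) (pr false false) rfl rfl))
      · exact notByesX (hall Nd.X (mem_nextCl (Or.inl rfl) (pr true false) rfl rfl))
  | blind _ _ hall =>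
      exact notByesc4 (hall false (Set.mem_univ _) Nd.c4 (mem_next (pr false false) rfl rfl))

lemma notByesr : ¬ M.EWin Ag.b Outcome.yes Nd.r := by
  intro h
  cases h with
  | leaf _ hl _ => exact hl Nd.u2 (ed_E (by decide))
  | known _ d _ _ hall =>
      exact notByesu4 (hall Nd.u4 (mem_nextCl (Or.inl rfl) (pr d true) rfl rfl))
  | blind _ _ hall =>
      exact notByesu4 (hall false (Set.mem_univ _) Nd.u4 (mem_next (pr false true) rfl rfl))

lemma notCyesc4 : ¬ M.EWin Ag.c Outcome.yes Nd.c4 := by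
  intro h
  cases h with
  | leaf _ hl _ => exact hl Nd.D3 (ed_E (by decide))
  | known _ d _ _ hall =>
      exact notCyesD3 (hall Nd.D3 (mem_nextCl (Or.inl rfl) (pr false d) rfl rfl))
  | blind _ _ hall =>
      exact notCyesD3 (hall false (Set.mem_univ _) Nd.D3 (mem_next (pr false false) rfl rfl))

lemma notCyesu4 : ¬ M.EWin Ag.c Outcome.yes Nd.u4 := by
  intro h
  cases h with
  | leaf _ hl _ => exact hl Nd.c4 (ed_E (by decide))
  | known _ d _ _ hall =>
      exact notCyesc4 (hall Nd.c4 (mem_nextCl (Or.inl rfl) (pr false d) rfl rfl))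
  | blind _ _ hall =>
      exact notCyesc4 (hall false (Set.mem_univ _) Nd.c4 (mem_next (pr false false) rfl rfl))

lemma notCyesu2 : ¬ M.EWin Ag.c Outcome.yes Nd.u2 := by
  intro h
  cases h with
  | leaf _ hl _ => exact hl Nd.D1 (ed_E (by decide))
  | known _ d _ _ hall =>
      exact notCyesD1 (hall Nd.D1 (mem_nextCl (Or.inl rfl) (pr false d) rfl rfl))
  | blind _ _ hall =>
      exact notCyesD1 (hall false (Set.mem_univ _) Nd.D1 (mem_next (pr false false) rfl rfl))

lemma notCyesr : ¬ M.EWin Ag.c Outcome.yes Nd.r := by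
  intro h
  cases h with
  | leaf _ hl _ => exact hl Nd.u2 (ed_E (by decide))
  | known _ d _ _ hall =>
      cases d
      · exact notCyesu2 (hall Nd.u2 (mem_nextCl (Or.inl rfl) (pr false false) rfl rfl))
      · exact notCyesu4 (hall Nd.u4 (mem_nextCl (Or.inl rfl) (pr false true) rfl rfl))
  | blind _ _ hall =>
      exact notCyesu2 (hall false (Set.mem_univ _) Nd.u2 (mem_next (pr false false) rfl rfl))

lemma notCnocp : ¬ M.EWin Ag.c Outcome.no Nd.cp := by
  intro h
  cases h with
  | leaf _ hl _ => exact hl Nd.D4 (ed_E (by decide))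
  | known _ d _ _ hall =>
      cases d
      · exact notCnoD4 (hall Nd.D4 (mem_nextCl (Or.inl rfl) (pr false false) rfl rfl))
      · exact leaf_not (v := Nd.Lpv) rfl (by decide)
          (hall Nd.Lpv (mem_nextCl (Or.inl rfl) (pr true true) rfl rfl))
  | blind _ _ hall =>
      exact leaf_not (v := Nd.Lpv) rfl (by decide)
        (hall true (Set.mem_univ _) Nd.Lpv (mem_next (pr true true) rfl rfl))

lemma notCnoX : ¬ M.EWin Ag.c Outcome.no Nd.X := by
  intro h
  cases h with
  | leaf _ hl _ => exact hl Nd.CD (ed_E (by decide))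
  | known _ d _ _ hall =>
      cases d
      · exact leaf_not (v := Nd.Lxy) rfl (by decide)
          (hall Nd.Lxy (mem_nextCl (Or.inl rfl) (pr true false) rfl rfl))
      · exact notCnocp (hall Nd.cp (mem_nextCl (Or.inl rfl) (pr true true) rfl rfl))
  | blind _ _ hall =>
      exact leaf_not (v := Nd.Lxy) rfl (by decide)
        (hall false (Set.mem_univ _) Nd.Lxy (mem_next (pr true false) rfl rfl))

/-! ## Paths -/

lemma chain2 {a b : Nd} (h1 : Ed a b) : List.Chain' M.toMech.E [a, b] :=
  List.isChain_cons_cons.mpr ⟨h1, List.isChain_singleton _⟩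

lemma chain3 {a b c : Nd} (h1 : Ed a b) (h2 : Ed b c) : List.Chain' M.toMech.E [a, b, c] :=
  List.isChain_cons_cons.mpr ⟨h1, chain2 h2⟩

lemma chain4 {a b c d : Nd} (h1 : Ed a b) (h2 : Ed b c) (h3 : Ed c d) :
    List.Chain' M.toMech.E [a, b, c, d] :=
  List.isChain_cons_cons.mpr ⟨h1, chain3 h2 h3⟩

lemma chain5 {a b c d e : Nd} (h1 : Ed a b) (h2 : Ed b c) (h3 : Ed c d) (h4 : Ed d e) :
    List.Chain' M.toMech.E [a, b, c, d, e] :=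
  List.isChain_cons_cons.mpr ⟨h1, chain4 h2 h3 h4⟩

lemma chain6 {a b c d e f : Nd} (h1 : Ed a b) (h2 : Ed b c) (h3 : Ed c d) (h4 : Ed d e)
    (h5 : Ed e f) : List.Chain' M.toMech.E [a, b, c, d, e, f] :=
  List.isChain_cons_cons.mpr ⟨h1, chain5 h2 h3 h4 h5⟩

/-! ## Gap-freeness -/

lemma gapFree : M.EpistemicGapFree := by
  intro v hv
  cases v with
  | r => exact absurd (ed_E (by decide)) (hv Nd.u2)
  | u2 => exact absurd (ed_E (by decide)) (hv Nd.D1)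
  | u4 => exact absurd (ed_E (by decide)) (hv Nd.c4)
  | c4 => exact absurd (ed_E (by decide)) (hv Nd.D3)
  | cp => exact absurd (ed_E (by decide)) (hv Nd.D4)
  | X => exact absurd (ed_E (by decide)) (hv Nd.CD)
  | D1 => exact absurd (ed_E (by decide)) (hv Nd.L1y)
  | D3 => exact absurd (ed_E (by decide)) (hv Nd.L3y)
  | D4 => exact absurd (ed_E (by decide)) (hv Nd.L7y)
  | CD => exact absurd (ed_E (by decide)) (hv Nd.L6y)
  | CD2 => exact absurd (ed_E (by decide)) (hv Nd.L5y)
  | L1y =>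
      exact ⟨Ag.b, [.r, .u2, .D1, .L1y],
        ⟨rfl, chain4 (by decide) (by decide) (by decide)⟩, rfl,
        .D1, by simp, isDec _ .L1y (by decide), pBnoD1⟩
  | L1n =>
      exact ⟨Ag.b, [.r, .u2, .D1, .L1n],
        ⟨rfl, chain4 (by decide) (by decide) (by decide)⟩, rfl,
        .D1, by simp, isDec _ .L1y (by decide), pByesD1⟩
  | L3y =>
      exact ⟨Ag.b, [.r, .u4, .c4, .D3, .L3y],
        ⟨rfl, chain5 (by decide) (by decide) (by decide) (by decide)⟩, rfl,
        .D3, by simp, isDec _ .L3y (by decide), pBnoD3⟩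
  | L3n =>
      exact ⟨Ag.b, [.r, .u4, .c4, .D3, .L3n],
        ⟨rfl, chain5 (by decide) (by decide) (by decide) (by decide)⟩, rfl,
        .D3, by simp, isDec _ .L3y (by decide), pByesD3⟩
  | L5y =>
      exact ⟨Ag.c, [.r, .u4, .c4, .CD2, .L5y],
        ⟨rfl, chain5 (by decide) (by decide) (by decide) (by decide)⟩, rfl,
        .CD2, by simp, isDec _ .L5y (by decide), pCnoCD2⟩
  | L5n =>
      exact ⟨Ag.c, [.r, .u4, .c4, .CD2, .L5n],
        ⟨rfl, chain5 (by decide) (by decide) (by decide) (by decide)⟩, rfl,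
        .CD2, by simp, isDec _ .L5y (by decide), pCyesCD2⟩
  | L6y =>
      exact ⟨Ag.c, [.r, .u4, .X, .CD, .L6y],
        ⟨rfl, chain5 (by decide) (by decide) (by decide) (by decide)⟩, rfl,
        .CD, by simp, isDec _ .L6y (by decide), pCnoCD⟩
  | L6n =>
      exact ⟨Ag.c, [.r, .u4, .X, .CD, .L6n],
        ⟨rfl, chain5 (by decide) (by decide) (by decide) (by decide)⟩, rfl,
        .CD, by simp, isDec _ .L6y (by decide), pCyesCD⟩
  | L7y =>
      exact ⟨Ag.b, [.r, .u4, .X, .cp, .D4, .L7y],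
        ⟨rfl, chain6 (by decide) (by decide) (by decide) (by decide) (by decide)⟩, rfl,
        .D4, by simp, isDec _ .L7y (by decide), pBnoD4⟩
  | L7n =>
      exact ⟨Ag.b, [.r, .u4, .X, .cp, .D4, .L7n],
        ⟨rfl, chain6 (by decide) (by decide) (by decide) (by decide) (by decide)⟩, rfl,
        .D4, by simp, isDec _ .L7y (by decide), pByesD4⟩
  | Lxy =>
      exact ⟨Ag.b, [.r, .u4, .X, .Lxy],
        ⟨rfl, chain4 (by decide) (by decide) (by decide)⟩, rfl,
        .u4, by simp, isDec _ .c4 (by decide), pBnou4⟩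
  | Lxn =>
      exact ⟨Ag.c, [.r, .u4, .X, .Lxn],
        ⟨rfl, chain4 (by decide) (by decide) (by decide)⟩, rfl,
        .X, by simp, isDec _ .CD (by decide), pCyesX⟩
  | Lpn =>
      exact ⟨Ag.c, [.r, .u4, .X, .cp, .Lpn],
        ⟨rfl, chain5 (by decide) (by decide) (by decide) (by decide)⟩, rfl,
        .X, by simp, isDec _ .CD (by decide), pCyesX⟩
  | Lpw =>
      exact ⟨Ag.c, [.r, .u4, .X, .cp, .Lpw],
        ⟨rfl, chain5 (by decide) (by decide) (by decide) (by decide)⟩, rfl,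
        .X, by simp, isDec _ .CD (by decide), pCyesX⟩
  | Lpv =>
      exact ⟨Ag.b, [.r, .u4, .X, .cp, .Lpv],
        ⟨rfl, chain5 (by decide) (by decide) (by decide) (by decide)⟩, rfl,
        .u4, by simp, isDec _ .c4 (by decide), pBnou4⟩

/-! ## Not an elected epistemic dictatorship -/

lemma notDict : ¬ M.ElectedEpistemicDictatorship := by
  intro h
  obtain ⟨u, hu, a, hda⟩ :=
    h [.r, .u4, .X, .Lxn] .Lxn
      ⟨rfl, chain4 (by decide) (by decide) (by decide)⟩ rfl (isLeaf_of _ rfl)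
  simp only [List.mem_cons, List.mem_singleton, List.not_mem_nil, or_false] at hu
  rcases hu with rfl | rfl | rfl | rfl
  · cases a
    · exact notByesr hda.1
    · exact notCyesr hda.1
  · cases a
    · exact notByesu4 hda.1
    · exact notCyesu4 hda.1
  · cases a
    · exact notByesX hda.1
    · exact notCnoX hda.2
  · exact leaf_not (v := Nd.Lxn) rfl (by decide) hda.1

end S17

theorem stmt17 :
    ∃ (V A Act : Type) (M : IMech V A Act),
      M.EpistemicGapFree ∧ ¬ M.ElectedEpistemicDictatorship :=
  ⟨S17.Nd, S17.Ag, Bool, S17.M, S17.gapFree, S17.notDict⟩
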